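/- Let M ∈ ℝ, c ∈ ℝ with c ≠ 0, and assume −(c − 1)² < 4M < min(4 − (c − 1)², (c + 1)(3c − 1)). Let H be the map H(x,y) = (x̄, ȳ) with x̄ = M + c·x − y², ȳ = (y + x̄² − M)/c. Then H has a fixed point (x₀, x₀) on the diagonal at which the Jacobian matrix of H has two non-real complex eigenvalues of modulus 1; i.e. for parameters between the fold curve F₀ and the period-doubling curves PD₁, PD₂, the map H has a symmetric elliptic fixed point. -/

import Mathlib

/-- The map `H(x,y) = (x̄, ȳ)` with `x̄ = M + c·x − y²` and `ȳ = (y + x̄² − M)/c`,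
the explicit form of the implicit system `x̄ = M + c·x − y²`, `c·ȳ = −M + y + x̄²`. -/
noncomputable def Hmap (M c : ℝ) (p : ℝ × ℝ) : ℝ × ℝ :=
  (M + c * p.1 - p.2 ^ 2,
    (p.2 + (M + c * p.1 - p.2 ^ 2) ^ 2 - M) / c)

/-- The Jacobian matrix (2×2 real derivative matrix) of `Hmap M c` at the point
`(x,y)`, where `x̄ = M + c·x − y²`:
`[[c, −2y], [2x̄, (1 − 4x̄y)/c]]`. -/
noncomputable def HJac (M c : ℝ) (p : ℝ × ℝ) : Matrix (Fin 2) (Fin 2) ℝ :=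
  !![c, -2 * p.2;
     2 * (M + c * p.1 - p.2 ^ 2), (1 - 4 * (M + c * p.1 - p.2 ^ 2) * p.2) / c]

/-- `μ ∈ ℂ` is an eigenvalue of the real 2×2 matrix `A`
(eigenvalues of real matrices are taken over `ℂ`). -/
def hasEigenvalue (A : Matrix (Fin 2) (Fin 2) ℝ) (μ : ℂ) : Prop :=
  (A.map (fun t : ℝ => (t : ℂ)) - μ • 1).det = 0

lemma det2aux (a b c d : ℝ) (μ : ℂ) :
    ((!![a, b; c, d]).map (fun t : ℝ => (t : ℂ)) - μ • 1).det
      = ((a : ℂ) - μ) * ((d : ℂ) - μ) - (b : ℂ) * (c : ℂ) := by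
  rw [Matrix.det_fin_two]
  simp [Matrix.one_apply]

/-- for `−(c−1)² < 4M < min(4 − (c−1)², (c+1)(3c−1))` (between the fold
curve `F₀` and the period-doubling curves `PD₁`, `PD₂`), the map `H` has a diagonal fixed
point `(x₀, x₀)` at which the Jacobian matrix has two non-real complex eigenvalues of
modulus `1`: a symmetric elliptic fixed point. -/
theorem stmt_17 (M c : ℝ) (hc : c ≠ 0)
    (h1 : -(c - 1) ^ 2 < 4 * M)
    (h2 : 4 * M < min (4 - (c - 1) ^ 2) ((c + 1) * (3 * c - 1))) :
    ∃ x₀ : ℝ, Hmap M c (x₀, x₀) = (x₀, x₀) ∧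
      (∃ μ : ℂ, μ.im ≠ 0 ∧ ‖μ‖ = 1 ∧
        hasEigenvalue (HJac M c (x₀, x₀)) μ) ∧
      (∀ μ : ℂ, hasEigenvalue (HJac M c (x₀, x₀)) μ →
        μ.im ≠ 0 ∧ ‖μ‖ = 1) := by
  have h2a : 4 * M < 4 - (c - 1) ^ 2 := lt_of_lt_of_le h2 (min_le_left _ _)
  have h2b : 4 * M < (c + 1) * (3 * c - 1) := lt_of_lt_of_le h2 (min_le_right _ _)
  set s : ℝ := Real.sqrt ((c - 1) ^ 2 + 4 * M) with hsdef
  have hD : (0 : ℝ) < (c - 1) ^ 2 + 4 * M := by linarith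
  have hs0 : 0 < s := Real.sqrt_pos.mpr hD
  have hs2 : s ^ 2 = (c - 1) ^ 2 + 4 * M := Real.sq_sqrt hD.le
  have hslt2 : s < 2 := by nlinarith
  have hs4c : s ^ 2 < 4 * c ^ 2 := by nlinarith
  obtain ⟨x₀, hK, hP⟩ : ∃ x₀ : ℝ, x₀ ^ 2 = (c - 1) * x₀ + M ∧
      (4 * x₀ ^ 2 - (c - 1) ^ 2) * (4 * x₀ ^ 2 - (c + 1) ^ 2) < 0 := by
    rcases lt_or_ge c 0 with hcneg | hc0
    · have hsc : s < -2 * c := by nlinarith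
      refine ⟨((c - 1) + s) / 2, by linear_combination hs2 / 4, ?_⟩
      have A : 0 < s * (2 - 2 * c - s) := by nlinarith
      have B : 0 < (2 - s) * (-2 * c - s) := by nlinarith
      nlinarith [mul_pos A B]
    · rcases lt_or_ge c 1 with hc1 | hc1
      · have hcpos : 0 < c := lt_of_le_of_ne hc0 (Ne.symm hc)
        have hsc : s < 2 * c := by nlinarith
        refine ⟨((c - 1) - s) / 2, by linear_combination hs2 / 4, ?_⟩
        have A : 0 < s * (s + 2 - 2 * c) := by nlinarith
        have B : 0 < (s + 2) * (2 * c - s) := by nlinarith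
        nlinarith [mul_pos A B]
      · refine ⟨((c - 1) + s) / 2, by linear_combination hs2 / 4, ?_⟩
        have A : 0 < s * (s + 2 * (c - 1)) := by nlinarith
        have B : 0 < (2 - s) * (s + 2 * c) := by nlinarith
        nlinarith [mul_pos A B]
  have hfix : M + c * x₀ - x₀ ^ 2 = x₀ := by linear_combination -hK
  set t : ℝ := (c ^ 2 + 1 - 4 * x₀ ^ 2) / (2 * c) with htdef
  have ht1 : t ^ 2 < 1 := by
    rw [htdef, div_pow, div_lt_one (by positivity)]
    nlinarith
  set r : ℝ := Real.sqrt (1 - t ^ 2) with hrdef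
  have hr2 : r ^ 2 = 1 - t ^ 2 := Real.sq_sqrt (by linarith)
  have hr0 : 0 < r := Real.sqrt_pos.mpr (by linarith)
  have hentry : (1 - 4 * x₀ * x₀) / c = 2 * t - c := by
    rw [htdef]; field_simp; ring
  have hA : HJac M c (x₀, x₀) = !![c, -2 * x₀; 2 * x₀, 2 * t - c] := by
    unfold HJac
    rw [show (x₀, x₀).1 = x₀ from rfl, show (x₀, x₀).2 = x₀ from rfl, hfix, hentry]
  have hconst : c * (2 * t - c) + 4 * (x₀ * x₀) = 1 := by
    rw [htdef]; field_simp; ring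
  have hc' : (c : ℂ) * (2 * (t : ℂ) - c) + 4 * ((x₀ : ℂ) * x₀) = 1 := by
    exact_mod_cast congrArg (fun x : ℝ => (x : ℂ)) hconst
  have hr' : (r : ℂ) ^ 2 = 1 - (t : ℂ) ^ 2 := by
    exact_mod_cast congrArg (fun x : ℝ => (x : ℂ)) hr2
  have hchar : ∀ μ : ℂ, hasEigenvalue (HJac M c (x₀, x₀)) μ ↔
      (μ - ((t : ℂ) + (r : ℂ) * Complex.I)) * (μ - ((t : ℂ) - (r : ℂ) * Complex.I)) = 0 := by
    intro μ
    unfold hasEigenvalue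
    rw [hA, det2aux]
    have key : ((c : ℂ) - μ) * (((2 * t - c : ℝ) : ℂ) - μ) - ((-2 * x₀ : ℝ) : ℂ) * ((2 * x₀ : ℝ) : ℂ)
        = (μ - ((t : ℂ) + (r : ℂ) * Complex.I)) * (μ - ((t : ℂ) - (r : ℂ) * Complex.I)) := by
      push_cast
      linear_combination hc' + (r : ℂ) ^ 2 * Complex.I_sq - hr'
    rw [key]
  have habs1 : ‖(t : ℂ) + (r : ℂ) * Complex.I‖ = 1 := by
    rw [Complex.norm_add_mul_I]
    rw [show t ^ 2 + r ^ 2 = 1 by linarith [hr2]]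
    exact Real.sqrt_one
  have habs2 : ‖(t : ℂ) - (r : ℂ) * Complex.I‖ = 1 := by
    rw [show (t : ℂ) - (r : ℂ) * Complex.I = (t : ℂ) + ((-r : ℝ) : ℂ) * Complex.I by
      push_cast; ring]
    rw [Complex.norm_add_mul_I]
    rw [show t ^ 2 + (-r) ^ 2 = 1 by rw [neg_sq]; linarith [hr2]]
    exact Real.sqrt_one
  refine ⟨x₀, ?_, ⟨(t : ℂ) + (r : ℂ) * Complex.I, ?_, habs1, ?_⟩, ?_⟩
  · unfold Hmap
    refine Prod.ext ?_ ?_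
    · exact hfix
    · show (x₀ + (M + c * x₀ - x₀ ^ 2) ^ 2 - M) / c = x₀
      rw [hfix]
      field_simp
      linear_combination hK
  · simp [hr0.ne']
  · rw [hchar, sub_self, zero_mul]
  · intro μ hmu
    rw [hchar] at hmu
    rcases mul_eq_zero.mp hmu with h | h
    · rw [sub_eq_zero] at h
      subst h
      refine ⟨by simp [hr0.ne'], habs1⟩
    · rw [sub_eq_zero] at h
      subst h
      refine ⟨?_, habs2⟩
      simp [hr0.ne']
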